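/- Fix n ≥ 1 experts, a budget c ≥ 0, and a message profile m : Fin n → ℝ. Suppose expert i is strictly pivotal, i.e., the allocation at the full sum ∑_k m_k differs from the allocation at s_i = ∑_{j≠i} m_j alone, and s_i ≠ 0; and suppose expert j is non-pivotal, i.e., the allocation at the full sum equals the allocation at s_j = ∑_{k≠j} m_k alone. Then on a positive outcome the total transfers are equal: t_i + r_i(1) = c/n = t_j + r_j(1); and on a negative outcome the pivotal expert is strictly more penalized: t_i + r_i(−1) < t_j + r_j(−1) = −c/n. Hence the mechanism satisfies Weak Accountability. -/
import Mathlib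


/-- The pivotal (VCG) transfer for message `m` against opponent sum `s`. -/
noncomputable def vcg (m s : ℝ) : ℝ :=
  if (0 ≤ m + s ∧ s < 0) ∨ (m + s < 0 ∧ 0 ≤ s) then -|s| else 0

/-- Opponent sum of expert `i`: the sum of all messages except `i`'s. -/
noncomputable def sOpp {n : ℕ} (m : Fin n → ℝ) (i : Fin n) : ℝ :=
  ∑ j ∈ Finset.univ.erase i, m j

/-- Ex-post reward with budget `c`, `n` experts, transfer `t`, outcome `Δ`. -/
noncomputable def reward (c : ℝ) (n : ℕ) (t : ℝ) (Δ : ℤ) : ℝ :=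
  if Δ = 1 then -t + c / n else t - c / n

lemma sum_eq_add_sOpp {n : ℕ} (m : Fin n → ℝ) (i : Fin n) :
    ∑ k, m k = m i + sOpp m i := by
  rw [sOpp, Finset.add_sum_erase _ _ (Finset.mem_univ i)]

/-- Weak Accountability. If expert `i` is strictly pivotal
(the allocation at the full sum differs from the allocation at `s_i`, and
`s_i ≠ 0`) while expert `j` is non-pivotal, then on a positive outcome both
total transfers equal `c/n`, and on a negative outcome the pivotal expert is
strictly more penalized, the non-pivotal one getting exactly `-c/n`. -/
theorem weak_accountability (n : ℕ) (hn : 1 ≤ n) (c : ℝ) (hc : 0 ≤ c)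
    (m : Fin n → ℝ) (i j : Fin n)
    (hpiv : ¬ ((0 ≤ ∑ k, m k) ↔ (0 ≤ sOpp m i))) (hsi : sOpp m i ≠ 0)
    (hnonpiv : (0 ≤ ∑ k, m k) ↔ (0 ≤ sOpp m j)) :
    vcg (m i) (sOpp m i) + reward c n (vcg (m i) (sOpp m i)) 1 = c / n ∧
    vcg (m j) (sOpp m j) + reward c n (vcg (m j) (sOpp m j)) 1 = c / n ∧
    vcg (m i) (sOpp m i) + reward c n (vcg (m i) (sOpp m i)) (-1) <
      vcg (m j) (sOpp m j) + reward c n (vcg (m j) (sOpp m j)) (-1) ∧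
    vcg (m j) (sOpp m j) + reward c n (vcg (m j) (sOpp m j)) (-1) = -(c / n) := by
  have hti : vcg (m i) (sOpp m i) = -|sOpp m i| := by
    rw [vcg, if_pos]
    rw [← sum_eq_add_sOpp]
    by_cases hA : 0 ≤ ∑ k, m k
    · exact Or.inl ⟨hA, lt_of_not_ge fun hB => hpiv ⟨fun _ => hB, fun _ => hA⟩⟩
    · exact Or.inr ⟨lt_of_not_ge hA,
        le_of_not_gt fun hB => hpiv ⟨fun h => (hA h).elim, fun h => ((not_le.2 hB) h).elim⟩⟩
  have htj : vcg (m j) (sOpp m j) = 0 := by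
    rw [vcg, if_neg]
    rw [← sum_eq_add_sOpp]
    rintro (⟨h1, h2⟩ | ⟨h1, h2⟩)
    · exact absurd (hnonpiv.mp h1) (not_le.2 h2)
    · exact absurd (hnonpiv.mpr h2) (not_le.2 h1)
  have habs : 0 < |sOpp m i| := abs_pos.mpr hsi
  refine ⟨by simp [reward, hti], by simp [reward, htj], ?_, by simp [reward, htj]⟩
  simp only [reward, hti, htj]
  norm_num
  exact hsi
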